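/- Let κ < 0 and let x, x₃, x₄ : ℝ → ℝ be C¹ functions satisfying x(𝔰)² + x₃(𝔰)² + x₄(𝔰)²/κ = 1/κ for all 𝔰, with x, x', x₄ all positive at some point 𝔰̃ and x₃(𝔰̃)·x'(𝔰̃) = x(𝔰̃)·x₃'(𝔰̃) with x₃'(𝔰̃) > 0. Then x'(𝔰̃)·x₄(𝔰̃) > x(𝔰̃)·x₄'(𝔰̃). -/

import Mathlib

theorem stmt_19 (κ : ℝ) (hκ : κ < 0) (x x₃ x₄ x' x₃' x₄' : ℝ → ℝ)
    (hx : ∀ s, HasDerivAt x (x' s) s)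
    (hx₃ : ∀ s, HasDerivAt x₃ (x₃' s) s)
    (hx₄ : ∀ s, HasDerivAt x₄ (x₄' s) s)
    (hsurf : ∀ s, x s ^ 2 + x₃ s ^ 2 + x₄ s ^ 2 / κ = 1 / κ)
    (st : ℝ) (hxp : 0 < x st) (hx'p : 0 < x' st) (hx₄p : 0 < x₄ st)
    (hF : x₃ st * x' st = x st * x₃' st) (hx₃'p : 0 < x₃' st) :
    x st * x₄' st < x' st * x₄ st := by
  have hd : HasDerivAt (fun s => x s ^ 2 + x₃ s ^ 2 + x₄ s ^ 2 / κ)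
      ((2 : ℕ) * x st ^ 1 * x' st + (2 : ℕ) * x₃ st ^ 1 * x₃' st
        + ((2 : ℕ) * x₄ st ^ 1 * x₄' st) / κ) st :=
    (((hx st).pow 2).add ((hx₃ st).pow 2)).add (((hx₄ st).pow 2).div_const κ)
  have hd0 : HasDerivAt (fun s => x s ^ 2 + x₃ s ^ 2 + x₄ s ^ 2 / κ) 0 st := by
    have : (fun s => x s ^ 2 + x₃ s ^ 2 + x₄ s ^ 2 / κ) = fun _ => 1 / κ := funext hsurf
    rw [this]; exact hasDerivAt_const _ _
  have heq : (2 : ℕ) * x st ^ 1 * x' st + (2 : ℕ) * x₃ st ^ 1 * x₃' st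
        + ((2 : ℕ) * x₄ st ^ 1 * x₄' st) / κ = 0 := hd.unique hd0
  have hs := hsurf st
  have hκ0 : κ ≠ 0 := ne_of_lt hκ
  have heq' : κ * (2 * x st * x' st + 2 * x₃ st * x₃' st) + 2 * x₄ st * x₄' st = 0 := by
    field_simp at heq; push_cast at heq; nlinarith [heq]
  have hs' : x₄ st ^ 2 = 1 - κ * (x st ^ 2 + x₃ st ^ 2) := by
    field_simp at hs; nlinarith [hs]
  have key : x₄ st * (x' st * x₄ st - x st * x₄' st) = x' st := by
    linear_combination x' st * hs' - (x st / 2) * heq' - κ * x₃ st * hF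
  nlinarith [key, hx₄p, hx'p]
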